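/- For a real-valued polynomial $p$ in $z$ and $\bar z$, the twist $T(w,z)$ satisfies $\frac{\partial T}{\partial \bar z}(w,z) = i\frac{\partial p}{\partial \bar z}(z) + i\sum_{j \ge 1}\frac{1}{j!}\frac{\partial^{j+1}p}{\partial z^j \partial \bar z}(z)(w-z)^j$, i.e. $\partial T/\partial \bar z$ is the complex conjugate of $\partial T/\partial z$ since $T$ is real-valued. -/

import Mathlib

open Finset Complex

/-- The coefficient `A_{jk}(z) = (1/(j!k!)) ∂^{j+k}p/∂z^j∂z̄^k (z)` of the
polynomial `p(z) = ∑_{m,n ≤ d} a m n · z^m · z̄^n`. -/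
noncomputable def Acoef (d : ℕ) (a : ℕ → ℕ → ℂ) (j k : ℕ) (z : ℂ) : ℂ :=
  ∑ m ∈ Finset.range (d + 1), ∑ n ∈ Finset.range (d + 1),
    (m.choose j : ℂ) * (n.choose k : ℂ) * a m n * z ^ (m - j) * (starRingEnd ℂ z) ^ (n - k)

/-- The twist `T(w,z) = -2 Im (∑_{j≥1} (1/j!) ∂^j p/∂z^j (z) (w-z)^j)`. -/
noncomputable def Twist (d : ℕ) (a : ℕ → ℕ → ℂ) (w z : ℂ) : ℝ :=
  -2 * (∑ j ∈ Finset.Icc 1 d, Acoef d a j 0 z * (w - z) ^ j).im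

/-- `Λ(z,δ) = ∑_{j,k ≥ 1} |A_{jk}(z)| δ^{j+k}`. -/
noncomputable def Lam (d : ℕ) (a : ℕ → ℕ → ℂ) (z : ℂ) (δ : ℝ) : ℝ :=
  ∑ j ∈ Finset.Icc 1 d, ∑ k ∈ Finset.Icc 1 d,
    ‖Acoef d a j k z‖ * δ ^ (j + k)

/-- `μ(z,δ) = inf_{j,k ≥ 1, A_{jk}(z) ≠ 0} (|δ|/|A_{jk}(z)|)^{1/(j+k)}`. -/
noncomputable def muF (d : ℕ) (a : ℕ → ℕ → ℂ) (z : ℂ) (δ : ℝ) : ℝ :=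
  sInf {x : ℝ | ∃ j k : ℕ, 1 ≤ j ∧ 1 ≤ k ∧ Acoef d a j k z ≠ 0 ∧
    x = (|δ| / ‖Acoef d a j k z‖) ^ (1 / ((j : ℝ) + (k : ℝ)))}

/-- The Wirtinger derivative `∂f/∂z = (1/2)(∂f/∂x - i ∂f/∂y)`. -/
noncomputable def wDz (f : ℂ → ℂ) (z : ℂ) : ℂ :=
  (fderiv ℝ f z 1 - Complex.I * fderiv ℝ f z Complex.I) / 2

/-- The Wirtinger derivative `∂f/∂z̄ = (1/2)(∂f/∂x + i ∂f/∂y)`. -/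
noncomputable def wDzbar (f : ℂ → ℂ) (z : ℂ) : ℂ :=
  (fderiv ℝ f z 1 + Complex.I * fderiv ℝ f z Complex.I) / 2

/-- The nonisotropic pseudodistance `d_{NI}(z,w,t) = |z-w| + μ(z, t+T(w,z))`. -/
noncomputable def dNI (d : ℕ) (a : ℕ → ℕ → ℂ) (z w : ℂ) (t : ℝ) : ℝ :=
  ‖z - w‖ + muF d a z (t + Twist d a w z)

noncomputable def conjK : ℂ →L[ℝ] ℂ := Complex.conjCLE.toContinuousLinearMap

lemma conjK_apply (h : ℂ) : conjK h = starRingEnd ℂ h := rfl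

lemma hasFDerivAt_mono (c w z : ℂ) (p q j : ℕ) :
    HasFDerivAt (fun ζ : ℂ => c * ζ ^ p * (starRingEnd ℂ ζ) ^ q * (w - ζ) ^ j)
      ((c * (p * z ^ (p - 1)) * (starRingEnd ℂ z) ^ q * (w - z) ^ j
          - c * z ^ p * (starRingEnd ℂ z) ^ q * (j * (w - z) ^ (j - 1)))
          • ContinuousLinearMap.id ℝ ℂ
        + (c * z ^ p * (q * (starRingEnd ℂ z) ^ (q - 1)) * (w - z) ^ j) • conjK) z := by
  have h1 : HasFDerivAt (fun ζ : ℂ => c * ζ ^ p)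
      (((c * (p * z ^ (p-1))) • (1 : ℂ →L[ℂ] ℂ)).restrictScalars ℝ) z := by
    have := (((hasDerivAt_pow p z).const_mul c).hasFDerivAt).restrictScalars ℝ
    apply this.congr_fderiv
    ext1 h
    simp [mul_comm]
  have h3 : HasFDerivAt (fun ζ : ℂ => (starRingEnd ℂ ζ) ^ q)
      (((q : ℂ) * (starRingEnd ℂ z) ^ (q-1)) • conjK) z := by
    have hp := ((hasDerivAt_pow q (starRingEnd ℂ z)).hasFDerivAt).restrictScalars ℝ
    have hc : HasFDerivAt (fun ζ : ℂ => starRingEnd ℂ ζ) conjK z :=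
      conjK.hasFDerivAt
    have := hp.comp z hc
    apply this.congr_fderiv
    ext1 h
    simp [conjK_apply, mul_comm]
  have h2 : HasFDerivAt (fun ζ : ℂ => (w - ζ) ^ j)
      (((j * (w - z) ^ (j-1) * (-1)) • (1 : ℂ →L[ℂ] ℂ)).restrictScalars ℝ) z := by
    have hi : HasDerivAt (fun ζ : ℂ => w - ζ) (-1) z := (hasDerivAt_id z).const_sub w
    have := (((hasDerivAt_pow j (w - z)).comp z hi).hasFDerivAt).restrictScalars ℝ
    apply this.congr_fderiv
    ext1 h
    simp [mul_comm]
  have := (h1.mul h3).mul h2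
  apply this.congr_fderiv
  ext1 h
  simp [conjK_apply]
  ring

noncomputable def alphaT (a : ℕ → ℕ → ℂ) (w z : ℂ) (j m n : ℕ) : ℂ :=
  (m.choose j : ℂ) * (n.choose 0 : ℂ) * a m n * (((m - j : ℕ) : ℂ) * z ^ (m - j - 1))
      * (starRingEnd ℂ z) ^ (n - 0) * (w - z) ^ j
    - (m.choose j : ℂ) * (n.choose 0 : ℂ) * a m n * z ^ (m - j)
      * (starRingEnd ℂ z) ^ (n - 0) * ((j : ℂ) * (w - z) ^ (j - 1))

noncomputable def betaT (a : ℕ → ℕ → ℂ) (w z : ℂ) (j m n : ℕ) : ℂ :=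
  (m.choose j : ℂ) * (n.choose 0 : ℂ) * a m n * z ^ (m - j)
    * (((n - 0 : ℕ) : ℂ) * (starRingEnd ℂ z) ^ (n - 0 - 1)) * (w - z) ^ j

lemma hasFDerivAt_G (d : ℕ) (a : ℕ → ℕ → ℂ) (w z : ℂ) :
    HasFDerivAt (fun ζ : ℂ => ∑ j ∈ Finset.Icc 1 d, Acoef d a j 0 ζ * (w - ζ) ^ j)
      ((∑ j ∈ Finset.Icc 1 d, ∑ m ∈ Finset.range (d+1), ∑ n ∈ Finset.range (d+1),
          alphaT a w z j m n) • ContinuousLinearMap.id ℝ ℂ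
        + (∑ j ∈ Finset.Icc 1 d, ∑ m ∈ Finset.range (d+1), ∑ n ∈ Finset.range (d+1),
          betaT a w z j m n) • conjK) z := by
  have key : HasFDerivAt
      (fun ζ : ℂ => ∑ j ∈ Finset.Icc 1 d, ∑ m ∈ Finset.range (d+1), ∑ n ∈ Finset.range (d+1),
        (m.choose j : ℂ) * (n.choose 0 : ℂ) * a m n * ζ ^ (m - j)
          * (starRingEnd ℂ ζ) ^ (n - 0) * (w - ζ) ^ j)
      (∑ j ∈ Finset.Icc 1 d, ∑ m ∈ Finset.range (d+1), ∑ n ∈ Finset.range (d+1),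
        ((alphaT a w z j m n) • ContinuousLinearMap.id ℝ ℂ
          + (betaT a w z j m n) • conjK)) z := by
    refine HasFDerivAt.fun_sum fun j _ => HasFDerivAt.fun_sum fun m _ => HasFDerivAt.fun_sum fun n _ => ?_
    exact hasFDerivAt_mono ((m.choose j : ℂ) * (n.choose 0 : ℂ) * a m n) w z (m - j) (n - 0) j
  have heq : (fun ζ : ℂ => ∑ j ∈ Finset.Icc 1 d, Acoef d a j 0 ζ * (w - ζ) ^ j)
      = (fun ζ : ℂ => ∑ j ∈ Finset.Icc 1 d, ∑ m ∈ Finset.range (d+1), ∑ n ∈ Finset.range (d+1),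
        (m.choose j : ℂ) * (n.choose 0 : ℂ) * a m n * ζ ^ (m - j)
          * (starRingEnd ℂ ζ) ^ (n - 0) * (w - ζ) ^ j) := by
    funext ζ
    simp only [Acoef, Finset.sum_mul]
  rw [heq]
  apply key.congr_fderiv
  ext1 h
  simp only [ContinuousLinearMap.coe_sum', Finset.sum_apply, ContinuousLinearMap.add_apply,
    ContinuousLinearMap.coe_smul', Pi.smul_apply, ContinuousLinearMap.coe_id', id_eq,
    smul_eq_mul, Finset.sum_add_distrib, ← Finset.sum_mul]

lemma telescope (d : ℕ) (a : ℕ → ℕ → ℂ) (w z : ℂ) (m n : ℕ) (hm : m ≤ d) :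
    ∑ j ∈ Finset.Icc 1 d, alphaT a w z j m n
      = -((m : ℂ) * a m n * z ^ (m - 1) * (starRingEnd ℂ z) ^ n) := by
  set v : ℕ → ℂ := fun j => ((j * m.choose j : ℕ) : ℂ) * a m n * z ^ (m - j)
    * (starRingEnd ℂ z) ^ n * (w - z) ^ (j - 1) with hv
  have hstep : ∀ j ∈ Finset.Icc 1 d, alphaT a w z j m n = v (j + 1) - v j := by
    intro j hj
    have hc : ((j + 1) * m.choose (j + 1) : ℕ) = m.choose j * (m - j) := by
      rw [mul_comm]
      exact Nat.choose_succ_right_eq m j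
    simp only [hv, alphaT, Nat.choose_zero_right, Nat.cast_one, Nat.sub_zero, hc]
    have he : m - (j + 1) = m - j - 1 := by omega
    have he2 : j + 1 - 1 = j := by omega
    rw [he, he2]
    push_cast
    ring
  rw [Finset.sum_congr rfl hstep]
  have hIcc : Finset.Icc 1 d = Finset.Ico 1 (d + 1) := by
    rw [Finset.Ico_add_one_right_eq_Icc]
  rw [hIcc, Finset.sum_Ico_eq_sum_range]
  simp only [Nat.add_sub_cancel]
  have : ∑ i ∈ Finset.range d, (v (1 + i + 1) - v (1 + i))
      = ∑ i ∈ Finset.range d, ((fun i => v (i + 1)) (i + 1) - (fun i => v (i + 1)) i) := by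
    refine Finset.sum_congr rfl fun i _ => ?_
    ring_nf
  rw [this, Finset.sum_range_sub (fun i => v (i + 1)) d]
  have hvd : v (d + 1) = 0 := by
    simp [hv, Nat.choose_eq_zero_of_lt (Nat.lt_succ_of_le hm)]
  have hv1 : v 1 = (m : ℂ) * a m n * z ^ (m - 1) * (starRingEnd ℂ z) ^ n := by
    simp [hv]
  rw [hvd, hv1]
  ring

lemma conj_SA (d : ℕ) (a : ℕ → ℕ → ℂ)
    (hreal : ∀ m n, (starRingEnd ℂ) (a m n) = a n m) (z w : ℂ) :
    (starRingEnd ℂ) (∑ j ∈ Finset.Icc 1 d, ∑ m ∈ Finset.range (d+1), ∑ n ∈ Finset.range (d+1),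
      alphaT a w z j m n) = -Acoef d a 0 1 z := by
  have hSA : (∑ j ∈ Finset.Icc 1 d, ∑ m ∈ Finset.range (d+1), ∑ n ∈ Finset.range (d+1),
      alphaT a w z j m n)
      = ∑ m ∈ Finset.range (d+1), ∑ n ∈ Finset.range (d+1),
        -((m : ℂ) * a m n * z ^ (m - 1) * (starRingEnd ℂ z) ^ n) := by
    rw [Finset.sum_comm]
    refine Finset.sum_congr rfl fun m hm => ?_
    rw [Finset.sum_comm]
    refine Finset.sum_congr rfl fun n _ => ?_
    exact telescope d a w z m n (by simpa [Nat.lt_succ_iff] using Finset.mem_range.mp hm)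
  rw [hSA]
  simp only [map_sum, map_neg, map_mul, map_pow, map_natCast, Complex.conj_conj, hreal]
  rw [Acoef, Finset.sum_comm]
  rw [← Finset.sum_neg_distrib]
  refine Finset.sum_congr rfl fun n _ => ?_
  rw [← Finset.sum_neg_distrib]
  refine Finset.sum_congr rfl fun m _ => ?_
  simp only [Nat.choose_zero_right, Nat.choose_one_right, Nat.sub_zero, Nat.cast_one]
  ring

lemma SB_eq (d : ℕ) (a : ℕ → ℕ → ℂ) (z w : ℂ) :
    (∑ j ∈ Finset.Icc 1 d, ∑ m ∈ Finset.range (d+1), ∑ n ∈ Finset.range (d+1),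
      betaT a w z j m n)
      = ∑ j ∈ Finset.Icc 1 d, Acoef d a j 1 z * (w - z) ^ j := by
  refine Finset.sum_congr rfl fun j _ => ?_
  rw [Acoef, Finset.sum_mul]
  refine Finset.sum_congr rfl fun m _ => ?_
  rw [Finset.sum_mul]
  refine Finset.sum_congr rfl fun n _ => ?_
  simp only [betaT, Nat.choose_zero_right, Nat.choose_one_right, Nat.sub_zero, Nat.cast_one]
  ring

/-- For a real-valued polynomial `p` in `z` and `z̄`, the Wirtinger `z̄`-derivative of
the twist (with `w` fixed) satisfies
`∂T/∂z̄ (w,z) = i ∂p/∂z̄(z) + i ∑_{j≥1} (1/j!) ∂^{j+1}p/∂z^j∂z̄(z) (w-z)^j`, and it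
is the complex conjugate of `∂T/∂z (w,z)` since `T` is real-valued. -/
theorem twist_deriv_zbar (d : ℕ) (a : ℕ → ℕ → ℂ)
    (hreal : ∀ m n, (starRingEnd ℂ) (a m n) = a n m) (z w : ℂ) :
    wDzbar (fun ζ => ((Twist d a w ζ : ℝ) : ℂ)) z
      = Complex.I * Acoef d a 0 1 z
        + Complex.I * ∑ j ∈ Finset.Icc 1 d, Acoef d a j 1 z * (w - z) ^ j ∧
    wDzbar (fun ζ => ((Twist d a w ζ : ℝ) : ℂ)) z
      = (starRingEnd ℂ) (wDz (fun ζ => ((Twist d a w ζ : ℝ) : ℂ)) z) := by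
  have hG := hasFDerivAt_G d a w z
  set SA := ∑ j ∈ Finset.Icc 1 d, ∑ m ∈ Finset.range (d+1), ∑ n ∈ Finset.range (d+1),
    alphaT a w z j m n with hSAdef
  set SB := ∑ j ∈ Finset.Icc 1 d, ∑ m ∈ Finset.range (d+1), ∑ n ∈ Finset.range (d+1),
    betaT a w z j m n with hSBdef
  set L : ℂ →L[ℝ] ℂ := SA • ContinuousLinearMap.id ℝ ℂ + SB • conjK with hL
  have hfun : (fun ζ : ℂ => ((Twist d a w ζ : ℝ) : ℂ))
      = fun ζ : ℂ => Complex.I * (∑ j ∈ Finset.Icc 1 d, Acoef d a j 0 ζ * (w - ζ) ^ j)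
        - Complex.I * conjK (∑ j ∈ Finset.Icc 1 d, Acoef d a j 0 ζ * (w - ζ) ^ j) := by
    funext ζ
    rw [conjK_apply]
    set s : ℂ := ∑ j ∈ Finset.Icc 1 d, Acoef d a j 0 ζ * (w - ζ) ^ j with hs
    simp only [Twist, ← hs]
    apply Complex.ext <;> simp <;> ring
  have hf : HasFDerivAt
      (fun ζ : ℂ => Complex.I * (∑ j ∈ Finset.Icc 1 d, Acoef d a j 0 ζ * (w - ζ) ^ j)
        - Complex.I * conjK (∑ j ∈ Finset.Icc 1 d, Acoef d a j 0 ζ * (w - ζ) ^ j))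
      (Complex.I • L - Complex.I • (conjK.comp L)) z :=
    (hG.const_mul Complex.I).sub ((conjK.hasFDerivAt.comp z hG).const_mul Complex.I)
  have hfd : fderiv ℝ (fun ζ : ℂ => ((Twist d a w ζ : ℝ) : ℂ)) z
      = Complex.I • L - Complex.I • (conjK.comp L) := by
    rw [hfun]
    exact hf.fderiv
  have hCA := conj_SA d a hreal z w
  have hSB := SB_eq d a z w
  rw [← hSAdef] at hCA
  rw [← hSBdef] at hSB
  have hL1 : L 1 = SA + SB := by
    rw [hL]
    simp [conjK_apply]
  have hLI : L Complex.I = SA * Complex.I - SB * Complex.I := by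
    rw [hL]
    simp [conjK_apply, Complex.conj_I]
    ring
  constructor
  · simp only [wDzbar, hfd]
    simp only [ContinuousLinearMap.sub_apply, ContinuousLinearMap.smul_apply,
      ContinuousLinearMap.coe_comp', Function.comp_apply, ContinuousLinearMap.add_apply,
      ContinuousLinearMap.coe_id', id_eq, conjK_apply, smul_eq_mul, map_one, Complex.conj_I,
      map_add, map_mul, mul_one]
    rw [hL1, hLI]
    simp only [map_add, map_sub, map_mul, Complex.conj_I]
    rw [hCA, hSB]
    linear_combination (Complex.I * (SA - (∑ j ∈ Finset.Icc 1 d, Acoef d a j 1 z * (w - z) ^ j)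
      - Acoef d a 0 1 z
      - (starRingEnd ℂ) (∑ j ∈ Finset.Icc 1 d, Acoef d a j 1 z * (w - z) ^ j)) / 2)
      * Complex.I_sq
  · simp only [wDzbar, wDz, hfd]
    simp only [ContinuousLinearMap.sub_apply, ContinuousLinearMap.smul_apply,
      ContinuousLinearMap.coe_comp', Function.comp_apply, ContinuousLinearMap.add_apply,
      ContinuousLinearMap.coe_id', id_eq, conjK_apply, smul_eq_mul, map_one, Complex.conj_I,
      map_add, map_mul, mul_one, map_sub, map_div₀, Complex.conj_conj, map_ofNat]
    rw [hL1, hLI]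
    simp only [map_add, map_sub, map_mul, Complex.conj_I, Complex.conj_conj]
    ring
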